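/- Let (G_ω, v) be an increasing weighted tree and let S be an independent set of G. If T is a connected component of G_S, then |V(T) ∩ N_G(S)| ≤ 1; moreover, if V(T) ∩ N_G(S) = {u}, then (T_ω, u) is an increasing weighted tree (with weight function the restriction of ω). -/

import Mathlib

open SimpleGraph

noncomputable section

variable {V : Type*}

/-- `p 0, p 1, …, p k` is a simple path in `G`: the vertices are pairwise distinct and
consecutive vertices are adjacent. -/
def IsSimplePathOn (G : SimpleGraph V) (p : ℕ → V) (k : ℕ) : Prop :=
  (∀ i ≤ k, ∀ j ≤ k, p i = p j → i = j) ∧ ∀ i < k, G.Adj (p i) (p (i + 1))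

/-- The path `p 0, …, p k` is increasing for the weight `ω`. -/
def IsIncreasingPath (ω : V → V → ℕ) (p : ℕ → V) (k : ℕ) : Prop :=
  ∀ i, i + 2 ≤ k → ω (p i) (p (i + 1)) ≤ ω (p (i + 1)) (p (i + 2))

/-- A leaf is a vertex of degree one. -/
def IsLeafVertex (G : SimpleGraph V) (x : V) : Prop := ∃! y, G.Adj x y

/-- `(G_ω, v)` is an increasing weighted tree with root `v`: `G` is a tree and every
simple path from a leaf to `v` is increasing. -/
def IsIncreasingWeightedTree (G : SimpleGraph V) (ω : V → V → ℕ) (v : V) : Prop :=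
  G.IsTree ∧ ∀ (p : ℕ → V) (k : ℕ), IsSimplePathOn G p k → IsLeafVertex G (p 0) → p k = v →
    IsIncreasingPath ω p k

/-- `S` is an independent set of `G`. -/
def IsIndepSetOn (G : SimpleGraph V) (S : Set V) : Prop :=
  ∀ a ∈ S, ∀ b ∈ S, ¬ G.Adj a b

/-- `N_G(S)`, the neighbourhood of the set `S`. -/
def setNbhd (G : SimpleGraph V) (S : Set V) : Set V :=
  {u | u ∉ S ∧ ∃ z ∈ S, G.Adj u z}

/-- `ν_S(u) = min { ω(uz) ∣ z ∈ S ∩ N_G(u) }`. -/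
def nuWt (G : SimpleGraph V) (ω : V → V → ℕ) (S : Set V) (u : V) : ℕ :=
  sInf {w | ∃ z ∈ S, G.Adj u z ∧ w = ω u z}

/-- The graph `G_S`: its vertices are those outside `S`, its edges are those of `G ∖ S`
except that every edge `uz` with `u ∈ N_G(S)` and `ω(uz) ≥ ν_S(u)` is removed. -/
def GSgraph (G : SimpleGraph V) (ω : V → V → ℕ) (S : Set V) : SimpleGraph V where
  Adj a b := G.Adj a b ∧ a ∉ S ∧ b ∉ S ∧
    (a ∈ setNbhd G S → ω a b < nuWt G ω S a) ∧
    (b ∈ setNbhd G S → ω b a < nuWt G ω S b)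
  symm := by
    constructor
    rintro a b ⟨h1, h2, h3, h4, h5⟩
    exact ⟨h1.symm, h3, h2, h5, h4⟩
  loopless := by
    constructor
    rintro a ⟨h, -⟩
    exact G.irrefl h

namespace ProofAuxC
open SimpleGraph Walk

variable {V : Type*} {G : SimpleGraph V} {v : V}

lemma getVert_mem_support {a b : V} (w : G.Walk a b) (n : ℕ) : w.getVert n ∈ w.support := by
  induction w generalizing n with
  | nil => simp [Walk.getVert]
  | cons h q ih =>
    cases n with
    | zero => simp [Walk.getVert]
    | succ n => simp only [Walk.support_cons, List.mem_cons, Walk.getVert_cons_succ]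
                exact Or.inr (ih n)

lemma getVert_inj {a b : V} {w : G.Walk a b} (hw : w.IsPath) :
    ∀ i ≤ w.length, ∀ j ≤ w.length, w.getVert i = w.getVert j → i = j := by
  induction w with
  | nil => intro i hi j hj _; simp only [Walk.length_nil, Nat.le_zero] at hi hj; omega
  | cons h q ih =>
    rw [Walk.cons_isPath_iff] at hw
    intro i hi j hj hij
    match i, j with
    | 0, 0 => rfl
    | 0, (j+1) =>
      exfalso
      rw [Walk.getVert_zero, Walk.getVert_cons_succ] at hij
      exact hw.2 (hij ▸ getVert_mem_support q j)
    | (i+1), 0 =>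
      exfalso
      rw [Walk.getVert_zero, Walk.getVert_cons_succ] at hij
      exact hw.2 (hij ▸ getVert_mem_support q i)
    | (i+1), (j+1) =>
      rw [Walk.getVert_cons_succ, Walk.getVert_cons_succ] at hij
      simp only [Walk.length_cons] at hi hj
      exact congrArg Nat.succ (ih hw.1 i (by omega) j (by omega) hij)

/-- Any path to `v` in a tree has length `dist`. -/
lemma path_length_eq_dist (hT : G.IsTree) {x : V} (p : G.Walk x v) (hp : p.IsPath) :
    p.length = G.dist x v := by
  obtain ⟨q, hq, hql⟩ := hT.isConnected.exists_path_of_dist x v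
  rw [(hT.existsUnique_path x v).unique hp hq]
  exact hql

lemma exists_parent (hc : G.Connected) {x : V} (hx : x ≠ v) :
    ∃ y, G.Adj x y ∧ G.dist y v + 1 = G.dist x v := by
  obtain ⟨p, hp, hlen⟩ := hc.exists_path_of_dist x v
  cases p with
  | nil => exact absurd rfl hx
  | @cons _ y _ h q =>
    refine ⟨y, h, ?_⟩
    have h1 : G.dist y v ≤ q.length := SimpleGraph.dist_le q
    have h2 : G.dist x v ≤ G.dist y v + 1 := by
      obtain ⟨r, _, hr⟩ := hc.exists_path_of_dist y v
      calc G.dist x v ≤ (Walk.cons h r).length := SimpleGraph.dist_le _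
        _ = G.dist y v + 1 := by rw [Walk.length_cons, hr]
    simp only [Walk.length_cons] at hlen
    omega

lemma adj_dist_cases (hT : G.IsTree) {x y : V} (h : G.Adj x y) :
    G.dist y v + 1 = G.dist x v ∨ G.dist x v + 1 = G.dist y v := by
  classical
  obtain ⟨p, hp, hlen⟩ := hT.isConnected.exists_path_of_dist x v
  by_cases hy : y ∈ p.support
  · left
    have hts := congrArg Walk.length (p.take_spec hy)
    rw [Walk.length_append] at hts
    have h1 : G.dist y v ≤ (p.dropUntil y hy).length := SimpleGraph.dist_le _
    have ht1 : (p.takeUntil y hy).length ≠ 0 := by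
      intro h0
      exact h.ne (Walk.eq_of_length_eq_zero h0)
    have h2 : G.dist x v ≤ G.dist y v + 1 := by
      obtain ⟨r, _, hr⟩ := hT.isConnected.exists_path_of_dist y v
      calc G.dist x v ≤ (Walk.cons h r).length := SimpleGraph.dist_le _
        _ = G.dist y v + 1 := by rw [Walk.length_cons, hr]
    omega
  · right
    have hq : (Walk.cons h.symm p).IsPath := hp.cons hy
    have := path_length_eq_dist hT _ hq
    rw [Walk.length_cons, hlen] at this
    omega

lemma parent_unique (hT : G.IsTree) {x y₁ y₂ : V} (h₁ : G.Adj x y₁) (h₂ : G.Adj x y₂)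
    (d₁ : G.dist y₁ v + 1 = G.dist x v) (d₂ : G.dist y₂ v + 1 = G.dist x v) : y₁ = y₂ := by
  classical
  have key : ∀ (y : V) (h : G.Adj x y), G.dist y v + 1 = G.dist x v →
      ∃ (q : G.Walk x v), q.IsPath ∧ q.getVert 1 = y := by
    intro y hxy hd
    obtain ⟨p, hp, hlen⟩ := hT.isConnected.exists_path_of_dist y v
    have hx : x ∉ p.support := by
      intro hx
      have h1 : G.dist x v ≤ (p.dropUntil x hx).length := SimpleGraph.dist_le _
      have h2 : (p.dropUntil x hx).length ≤ p.length := Walk.length_dropUntil_le p hx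
      omega
    exact ⟨Walk.cons hxy p, hp.cons hx, by rw [Walk.getVert_cons_succ, Walk.getVert_zero]⟩
  obtain ⟨q₁, hq₁, hg₁⟩ := key y₁ h₁ d₁
  obtain ⟨q₂, hq₂, hg₂⟩ := key y₂ h₂ d₂
  rw [← hg₁, ← hg₂, (hT.existsUnique_path x v).unique hq₁ hq₂]


open Classical in
noncomputable def par (G : SimpleGraph V) (v x : V) : V :=
  if h : ∃ y, G.Adj x y ∧ G.dist y v + 1 = G.dist x v then h.choose else v

lemma par_spec (hT : G.IsTree) {x : V} (hx : x ≠ v) :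
    G.Adj x (par G v x) ∧ G.dist (par G v x) v + 1 = G.dist x v := by
  have h := exists_parent (v := v) hT.isConnected hx
  rw [par, dif_pos h]
  exact h.choose_spec

lemma ne_v_of_dist_pos (hT : G.IsTree) {x : V} (hx : 0 < G.dist x v) : x ≠ v := by
  intro he; rw [he, SimpleGraph.dist_self] at hx; omega

lemma par_iter (hT : G.IsTree) (x : V) (j : ℕ) (hj : j ≤ G.dist x v) :
    G.dist ((par G v)^[j] x) v = G.dist x v - j := by
  induction j with
  | zero => simp
  | succ j ih =>
    have ihj := ih (by omega)
    have hne : (par G v)^[j] x ≠ v := ne_v_of_dist_pos hT (by omega)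
    rw [Function.iterate_succ_apply']
    have h2 := (par_spec hT hne).2
    omega

lemma par_adj (hT : G.IsTree) (x : V) (j : ℕ) (hj : j < G.dist x v) :
    G.Adj ((par G v)^[j] x) ((par G v)^[j + 1] x) := by
  have h := par_iter hT x j (le_of_lt hj)
  have hne : (par G v)^[j] x ≠ v := ne_v_of_dist_pos hT (by omega)
  rw [Function.iterate_succ_apply']
  exact (par_spec hT hne).1

lemma par_final (hT : G.IsTree) (x : V) : (par G v)^[G.dist x v] x = v := by
  have h := par_iter (v := v) hT x (G.dist x v) le_rfl
  simp only [Nat.sub_self] at h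
  exact (hT.isConnected.dist_eq_zero_iff).mp h

lemma dist_lt_card [Fintype V] (hc : G.Connected) (a b : V) : G.dist a b < Fintype.card V := by
  obtain ⟨p, hp, hlen⟩ := hc.exists_path_of_dist a b
  rw [← hlen]
  exact hp.length_lt

lemma exists_desc [Fintype V] (hT : G.IsTree) :
    ∀ (n : ℕ) (w : V), w ≠ v → Fintype.card V - G.dist w v ≤ n →
    ∃ (q : ℕ → V) (m : ℕ), IsLeafVertex G (q 0) ∧ q m = w ∧
      (∀ j < m, G.Adj (q j) (q (j + 1))) ∧
      (∀ j ≤ m, G.dist (q j) v = G.dist w v + (m - j)) := by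
  intro n
  induction n with
  | zero =>
    intro w hw hn
    exact absurd hn (by have := dist_lt_card hT.isConnected w v; omega)
  | succ n ih =>
    intro w hw hn
    by_cases hleaf : IsLeafVertex G w
    · exact ⟨fun _ => w, 0, hleaf, rfl, fun j hj => absurd hj (Nat.not_lt_zero j),
        fun j hj => by interval_cases j; simp⟩
    · have hp := par_spec hT hw
      have hex : ∃ c, G.Adj w c ∧ c ≠ par G v w := by
        by_contra hc
        push_neg at hc
        exact hleaf ⟨par G v w, hp.1, fun y hy => hc y hy⟩
      obtain ⟨c, hwc, hcp⟩ := hex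
      have hcd : G.dist c v = G.dist w v + 1 := by
        rcases adj_dist_cases hT hwc with h | h
        · exact absurd (parent_unique hT hwc hp.1 h hp.2) hcp
        · omega
      have hcv : c ≠ v := ne_v_of_dist_pos hT (by omega)
      have hlt : G.dist w v < Fintype.card V := dist_lt_card hT.isConnected w v
      obtain ⟨q, m, hq0, hqm, hadj, hdist⟩ := ih c hcv (by omega)
      refine ⟨fun j => if j ≤ m then q j else w, m + 1, ?_, ?_, ?_, ?_⟩
      · show IsLeafVertex G (if 0 ≤ m then q 0 else w)
        rw [if_pos (Nat.zero_le m)]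
        exact hq0
      · show (if m + 1 ≤ m then q (m + 1) else w) = w
        rw [if_neg (by omega)]
      · intro j hj
        show G.Adj (if j ≤ m then q j else w) (if j + 1 ≤ m then q (j + 1) else w)
        by_cases hjm : j < m
        · rw [if_pos hjm.le, if_pos (show j + 1 ≤ m from hjm)]
          exact hadj j hjm
        · have hjm' : j = m := by omega
          rw [hjm', if_pos (le_refl m), if_neg (show ¬ m + 1 ≤ m by omega), hqm]
          exact hwc.symm
      · intro j hj
        show G.dist (if j ≤ m then q j else w) v = G.dist w v + (m + 1 - j)
        by_cases hjm : j ≤ m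
        · rw [if_pos hjm, hdist j hjm]
          omega
        · have : j = m + 1 := by omega
          subst this
          rw [if_neg hjm]
          omega


lemma child_le_parent [Fintype V] {ω : V → V → ℕ} (hG : IsIncreasingWeightedTree G ω v)
    {x w y : V} (hxw : G.Adj x w) (hw : G.dist w v = G.dist x v + 1)
    (hxy : G.Adj x y) (hy : G.dist y v + 1 = G.dist x v) : ω w x ≤ ω x y := by
  have hT := hG.1
  have hwv : w ≠ v := ne_v_of_dist_pos hT (by omega)
  have hxv : x ≠ v := ne_v_of_dist_pos hT (by omega)
  obtain ⟨q, m, hq0, hqm, hadj, hdist⟩ :=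
    exists_desc hT (Fintype.card V - G.dist w v) w hwv le_rfl
  set n := G.dist x v with hn
  set p : ℕ → V := fun j => if j ≤ m then q j else (par G v)^[j - (m + 1)] x with hp
  set k := m + 1 + n with hk
  have hdall : ∀ j ≤ k, G.dist (p j) v = k - j := by
    intro j hj
    by_cases hjm : j ≤ m
    · show G.dist (if j ≤ m then q j else (par G v)^[j - (m + 1)] x) v = k - j
      rw [if_pos hjm, hdist j hjm]
      omega
    · show G.dist (if j ≤ m then q j else (par G v)^[j - (m + 1)] x) v = k - j
      rw [if_neg hjm, par_iter (v := v) hT x (j - (m + 1)) (by omega)]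
      omega
  have hsp : IsSimplePathOn G p k := by
    constructor
    · intro i hi j hj hij
      have h1 := hdall i hi
      have h2 := hdall j hj
      rw [hij] at h1
      omega
    · intro i hi
      by_cases him : i < m
      · show G.Adj (if i ≤ m then q i else _) (if i + 1 ≤ m then q (i + 1) else _)
        rw [if_pos him.le, if_pos (show i + 1 ≤ m from him)]
        exact hadj i him
      · by_cases him' : i = m
        · show G.Adj (if i ≤ m then q i else _) (if i + 1 ≤ m then q (i + 1) else _)
          rw [him', if_pos (le_refl m), if_neg (show ¬ m + 1 ≤ m by omega), hqm]
          have : m + 1 - (m + 1) = 0 := by omega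
          rw [this, Function.iterate_zero_apply]
          exact hxw.symm
        · show G.Adj (if i ≤ m then q i else _) (if i + 1 ≤ m then q (i + 1) else _)
          rw [if_neg (show ¬ i ≤ m by omega), if_neg (show ¬ i + 1 ≤ m by omega)]
          have h1 : i + 1 - (m + 1) = (i - (m + 1)) + 1 := by omega
          rw [h1]
          exact par_adj hT x (i - (m + 1)) (by omega)
  have hleaf : IsLeafVertex G (p 0) := by
    show IsLeafVertex G (if 0 ≤ m then q 0 else _)
    rw [if_pos (Nat.zero_le m)]
    exact hq0
  have hpk : p k = v := by
    show (if k ≤ m then q k else (par G v)^[k - (m + 1)] x) = v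
    rw [if_neg (show ¬ k ≤ m by omega)]
    have : k - (m + 1) = n := by omega
    rw [this, hn]
    exact par_final hT x
  have hinc := hG.2 p k hsp hleaf hpk m (by omega)
  have e1 : p m = w := by
    show (if m ≤ m then q m else _) = w
    rw [if_pos (le_refl m)]; exact hqm
  have e2 : p (m + 1) = x := by
    show (if m + 1 ≤ m then q (m + 1) else (par G v)^[m + 1 - (m + 1)] x) = x
    rw [if_neg (show ¬ m + 1 ≤ m by omega)]
    have : m + 1 - (m + 1) = 0 := by omega
    rw [this, Function.iterate_zero_apply]
  have e3 : p (m + 2) = par G v x := by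
    show (if m + 2 ≤ m then q (m + 2) else (par G v)^[m + 2 - (m + 1)] x) = par G v x
    rw [if_neg (show ¬ m + 2 ≤ m by omega)]
    have : m + 2 - (m + 1) = 1 := by omega
    rw [this, Function.iterate_one]
  rw [e1, e2, e3] at hinc
  have hyp : y = par G v x :=
    parent_unique hT hxy (par_spec hT hxv).1 hy (par_spec hT hxv).2
  rw [hyp]
  exact hinc

lemma nu_attained {ω : V → V → ℕ} {S : Set V} {u : V} (hu : u ∈ setNbhd G S) :
    ∃ z ∈ S, G.Adj u z ∧ nuWt G ω S u = ω u z := by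
  have hne : {w | ∃ z ∈ S, G.Adj u z ∧ w = ω u z}.Nonempty := by
    obtain ⟨z, hz, hadj⟩ := hu.2
    exact ⟨ω u z, z, hz, hadj, rfl⟩
  obtain ⟨z, hz, hadj, he⟩ := Nat.sInf_mem hne
  exact ⟨z, hz, hadj, he⟩

lemma nbhd_edge_down [Fintype V] {ω : V → V → ℕ} {S : Set V}
    (hG : IsIncreasingWeightedTree G ω v) (hsym : ∀ a b, ω a b = ω b a)
    {u w : V} (hu : u ∈ setNbhd G S) (h : (GSgraph G ω S).Adj u w) :
    G.dist w v = G.dist u v + 1 := by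
  have hT := hG.1
  obtain ⟨hadj, hus, hws, hlt, -⟩ := h
  have hlt := hlt hu
  obtain ⟨z, hzS, hzadj, hze⟩ := nu_attained (ω := ω) hu
  rcases adj_dist_cases (v := v) hT hadj with hdw | hdw
  · exfalso
    have hzw : z ≠ w := fun he => hws (he ▸ hzS)
    have hzd : G.dist z v = G.dist u v + 1 := by
      rcases adj_dist_cases (v := v) hT hzadj with h' | h'
      · exact absurd (parent_unique hT hzadj hadj h' hdw) hzw
      · omega
    have hle := child_le_parent hG hzadj hzd hadj hdw
    rw [hsym z u] at hle
    rw [hze] at hlt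
    omega
  · omega

lemma down_lock_all (hT : G.IsTree) {p : ℕ → V} {k : ℕ} (hp : IsSimplePathOn G p k)
    {j : ℕ} (hd : G.dist (p (j + 1)) v = G.dist (p j) v + 1) :
    ∀ i, j ≤ i → i < k → G.dist (p (i + 1)) v = G.dist (p i) v + 1 := by
  intro i hji hik
  induction i, hji using Nat.le_induction with
  | base => exact hd
  | succ i hji ih =>
    have hik' : i < k := by omega
    have hdi := ih hik'
    have hadj := hp.2 (i + 1) hik
    rcases adj_dist_cases (v := v) hT hadj with h' | h'
    · exfalso
      have heq := parent_unique hT hadj (hp.2 i hik').symm h' (by omega)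
      exact absurd (hp.1 (i + 2) (by omega) i (by omega) heq) (by omega)
    · exact h'.symm

lemma descent_down [Fintype V] {ω : V → V → ℕ} (hG : IsIncreasingWeightedTree G ω v)
    {p : ℕ → V} {k : ℕ} (hp : IsSimplePathOn G p k) {j : ℕ} (hj : j + 2 ≤ k)
    (hdec : ω (p (j + 1)) (p (j + 2)) < ω (p j) (p (j + 1))) :
    G.dist (p (j + 2)) v = G.dist (p (j + 1)) v + 1 := by
  have hT := hG.1
  have hadj1 := hp.2 j (by omega)
  have hadj2 := hp.2 (j + 1) (by omega)
  rcases adj_dist_cases (v := v) hT hadj2 with h2 | h2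
  · exfalso
    have h1 : G.dist (p j) v = G.dist (p (j + 1)) v + 1 := by
      rcases adj_dist_cases (v := v) hT hadj1.symm with h1 | h1
      · have heq := parent_unique hT hadj2 hadj1.symm h2 h1
        exact absurd (hp.1 (j + 2) (by omega) j (by omega) heq) (by omega)
      · omega
    have hcc := child_le_parent hG hadj1.symm h1 hadj2 h2
    have hcc2 : ω (p j) (p (j + 1)) ≤ ω (p (j + 1)) (p (j + 2)) := hcc
    omega
  · exact h2.symm

lemma walk_lift {H : SimpleGraph V} (c : H.ConnectedComponent) :
    ∀ {a b : V} (_ : H.Walk a b) (ha : a ∈ c.supp) (hb : b ∈ c.supp),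
      Nonempty ((H.induce c.supp).Walk ⟨a, ha⟩ ⟨b, hb⟩) := by
  intro a b w
  induction w with
  | nil => intro ha hb; exact ⟨SimpleGraph.Walk.nil⟩
  | @cons a x b h q ih =>
    intro ha hb
    have hx : x ∈ c.supp := by
      rw [SimpleGraph.ConnectedComponent.mem_supp_iff] at ha ⊢
      rw [← ha]
      exact SimpleGraph.ConnectedComponent.sound ⟨h.symm.toWalk⟩
    obtain ⟨q'⟩ := ih hx hb
    have hadj : (H.induce c.supp).Adj ⟨a, ha⟩ ⟨x, hx⟩ := h
    exact ⟨SimpleGraph.Walk.cons hadj q'⟩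

lemma comp_connected {H : SimpleGraph V} (c : H.ConnectedComponent) :
    (H.induce c.supp).Connected := by
  obtain ⟨a0, ha0⟩ := Quot.exists_rep c
  haveI : Nonempty c.supp := ⟨⟨a0, ha0⟩⟩
  refine ⟨?_⟩
  rintro ⟨a, ha⟩ ⟨b, hb⟩
  have hr : H.Reachable a b := SimpleGraph.ConnectedComponent.exact (ha.trans hb.symm)
  obtain ⟨w⟩ := hr
  obtain ⟨w'⟩ := walk_lift c w ha hb
  exact ⟨w'⟩


end ProofAuxC

open ProofAuxC in
/-- Lemma 1.7(2): if `(G_ω, v)` is an increasing weighted tree and `S` is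
an independent set of `G`, then every connected component `T` of `G_S` meets `N_G(S)` in at
most one vertex; moreover if `V(T) ∩ N_G(S) = {u}`, then `(T_ω, u)` is an increasing
weighted tree. -/
theorem component_of_GS_increasing {V : Type*} [Fintype V]
    (G : SimpleGraph V) (ω : V → V → ℕ)
    (hsym : ∀ a b, ω a b = ω b a) (hpos : ∀ a b, G.Adj a b → 0 < ω a b)
    (v : V) (hG : IsIncreasingWeightedTree G ω v)
    (S : Set V) (hS : IsIndepSetOn G S)
    (c : (GSgraph G ω S).ConnectedComponent) :
    (c.supp ∩ setNbhd G S).ncard ≤ 1 ∧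
    ∀ (u : V) (hu : c.supp ∩ setNbhd G S = {u}),
      IsIncreasingWeightedTree ((GSgraph G ω S).induce c.supp)
        (fun a b => ω a.1 b.1)
        ⟨u, (((Set.ext_iff.mp hu) u).mpr rfl).1⟩ := by
  classical
  have hT := hG.1
  have toG : ∀ {p : ℕ → V} {k : ℕ}, IsSimplePathOn (GSgraph G ω S) p k → IsSimplePathOn G p k :=
    fun hp => ⟨hp.1, fun i hi => (hp.2 i hi).1⟩
  have main : ∀ (p : ℕ → V) (k : ℕ), IsSimplePathOn (GSgraph G ω S) p k → p 0 ∈ setNbhd G S →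
      ∀ i < k, G.dist (p (i + 1)) v = G.dist (p i) v + 1 := by
    intro p k hp h0 i hik
    have h1 : G.dist (p (0 + 1)) v = G.dist (p 0) v + 1 :=
      nbhd_edge_down hG hsym h0 (hp.2 0 (by omega))
    exact down_lock_all hT (toG hp) h1 i (by omega) hik
  constructor
  · rw [Set.ncard_le_one_iff]
    intro a b ha hb
    by_contra hab
    obtain ⟨ha1, ha2⟩ := ha
    obtain ⟨hb1, hb2⟩ := hb
    have hr : (GSgraph G ω S).Reachable a b := SimpleGraph.ConnectedComponent.exact (ha1.trans hb1.symm)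
    obtain ⟨w⟩ := hr
    set P : (GSgraph G ω S).Walk a b := (w.toPath : (GSgraph G ω S).Walk a b) with hP
    set p : ℕ → V := fun j => P.getVert j with hpdef
    set k := P.length with hk
    have hp : IsSimplePathOn (GSgraph G ω S) p k :=
      ⟨fun i hi j hj => getVert_inj w.toPath.2 i hi j hj,
       fun i hi => P.adj_getVert_succ hi⟩
    have hpa : p 0 = a := P.getVert_zero
    have hpb : p k = b := P.getVert_length
    have hkne : k ≠ 0 := by
      intro h0
      exact hab (by rw [← hpa, ← hpb, h0])
    have hlast := main p k hp (by rw [hpa]; exact ha2) (k - 1) (by omega)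
    have ek : k - 1 + 1 = k := by omega
    rw [ek] at hlast
    have hedge : (GSgraph G ω S).Adj (p k) (p (k - 1)) := by
      have := hp.2 (k - 1) (by omega)
      rw [ek] at this
      exact this.symm
    have hdown := nbhd_edge_down hG hsym (by rw [hpb]; exact hb2) hedge
    rw [hpb] at hlast hdown
    omega
  · intro u hu
    have huS : u ∈ c.supp ∩ setNbhd G S := ((Set.ext_iff.mp hu) u).mpr rfl
    constructor
    · constructor
      · exact comp_connected c
      · intro x cyc hcyc
        refine hT.IsAcyclic
          (cyc.map ⟨Subtype.val, fun {a b} h => ((h : (GSgraph G ω S).Adj a.1 b.1)).1⟩)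
          (hcyc.map ?_)
        intro x y hxy
        exact Subtype.val_injective hxy
    · intro p k hp _ hend i hi
      by_contra hlt2
      push_neg at hlt2
      set p' : ℕ → V := fun j => (p j).1 with hp'def
      have hpH : IsSimplePathOn (GSgraph G ω S) p' k :=
        ⟨fun i hi j hj hij => hp.1 i hi j hj (Subtype.ext hij),
         fun i hi => hp.2 i hi⟩
      have hpG := toG hpH
      have hd : G.dist (p' (i + 1 + 1)) v = G.dist (p' (i + 1)) v + 1 :=
        descent_down hG hpG hi hlt2
      have hlast := down_lock_all hT hpG (j := i + 1) hd (k - 1) (by omega) (by omega)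
      have ek : k - 1 + 1 = k := by omega
      rw [ek] at hlast
      have hu2 : p' k = u := by rw [hp'def]; simp only []; rw [hend]
      have hedge : (GSgraph G ω S).Adj (p' k) (p' (k - 1)) := by
        have := hpH.2 (k - 1) (by omega)
        rw [ek] at this
        exact this.symm
      have hdown := nbhd_edge_down hG hsym (by rw [hu2]; exact huS.2) hedge
      rw [hu2] at hlast hdown
      omega
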